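/- Let 𝒳 be a finite set; let P^f, P^R, and P^{f⁰} be probability distributions on 𝒳 such that P^f satisfies overlap with respect to P^{f⁰}; let P̂^R : 𝒳 → ℝ be an arbitrary function with P̂^R(x) > 0 for all x (a possibly misspecified estimate of P^R); and let g : 𝒳 → ℝ. Let (Ω, μ) be a probability space; for i = 1,…,n let X_i : Ω → 𝒳 have law P^R and Y_i : Ω → ℝ be integrable with ∫ Y_i·1{X_i = x} dμ = g(x)·P^R(x) for all x; for j = 1,…,m let X̃_j : Ω → 𝒳 have law P^{f⁰}. Then the estimator (1/n) ∑_{i=1}^n (P^f(X_i)/P̂^R(X_i))·(Y_i − g(X_i)) + (1/m) ∑_{j=1}^m (P^f(X̃_j)/P^{f⁰}(X̃_j))·g(X̃_j) has expectation ∑_{x∈𝒳} P^f(x)·g(x) = V(f). (Theorem 2, case 2: unbiasedness of DR-CPO when the outcome model equals the true conditional mean g, regardless of whether the estimated randomization distribution P̂^R is correct.) -/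

import Mathlib

open MeasureTheory Finset


lemma aux_decomp {𝒳 : Type*} [Fintype 𝒳] {Ω : Type*} (X : Ω → 𝒳) (c : 𝒳 → ℝ) (Y : Ω → ℝ) :
    (fun ω => c (X ω) * Y ω) =
      fun ω => ∑ x, Set.indicator {ω' | X ω' = x} (fun ω' => c x * Y ω') ω := by
  funext ω
  rw [Finset.sum_eq_single (X ω)]
  · simp [Set.indicator_of_mem, Set.mem_setOf_eq]
  · intro x _ hx
    exact Set.indicator_of_notMem (by simpa using fun h => hx h.symm) _
  · simp

lemma aux_integrable {𝒳 : Type*} [Fintype 𝒳] [MeasurableSpace 𝒳] [MeasurableSingletonClass 𝒳]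
    {Ω : Type*} [MeasurableSpace Ω] {μ : Measure Ω} {X : Ω → 𝒳} (hX : Measurable X)
    (c : 𝒳 → ℝ) {Y : Ω → ℝ} (hY : Integrable Y μ) :
    Integrable (fun ω => c (X ω) * Y ω) μ := by
  rw [aux_decomp]
  exact integrable_finset_sum _ fun x _ =>
    (hY.const_mul (c x)).indicator (hX (measurableSet_singleton x))

lemma aux_integral {𝒳 : Type*} [Fintype 𝒳] [MeasurableSpace 𝒳] [MeasurableSingletonClass 𝒳]
    {Ω : Type*} [MeasurableSpace Ω] {μ : Measure Ω} {X : Ω → 𝒳} (hX : Measurable X)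
    (c : 𝒳 → ℝ) {Y : Ω → ℝ} (hY : Integrable Y μ) :
    ∫ ω, c (X ω) * Y ω ∂μ = ∑ x, c x * ∫ ω in {ω' | X ω' = x}, Y ω ∂μ := by
  rw [aux_decomp]
  rw [integral_finset_sum _ fun x _ =>
    (hY.const_mul (c x)).indicator
      (show MeasurableSet {ω' | X ω' = x} from hX (measurableSet_singleton x))]
  refine Finset.sum_congr rfl fun x _ => ?_
  rw [integral_indicator (show MeasurableSet {ω' | X ω' = x} from hX (measurableSet_singleton x)), integral_const_mul]


/-- **Theorem 2, case 2.** Unbiasedness of the DR-CPO estimator when the outcome model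
equals the true conditional mean `g`, regardless of whether the estimated randomization
distribution `P̂R` is correct:
`∫ [(1/n) ∑ i, (Pf(Xᵢ)/P̂R(Xᵢ))(Yᵢ − g(Xᵢ)) + (1/m) ∑ j, (Pf(X̃ⱼ)/Pf0(X̃ⱼ)) g(X̃ⱼ)] dμ
  = ∑ x, Pf x * g x = V(f)`. -/
theorem dr_cpo_unbiased_correct_outcome_model {𝒳 : Type*} [Fintype 𝒳]
    [MeasurableSpace 𝒳] [MeasurableSingletonClass 𝒳]
    (Pf PR Pf0 : 𝒳 → ℝ)
    (hPf_nonneg : ∀ x, 0 ≤ Pf x) (hPf_sum : ∑ x, Pf x = 1)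
    (hPR_nonneg : ∀ x, 0 ≤ PR x) (hPR_sum : ∑ x, PR x = 1)
    (hPf0_nonneg : ∀ x, 0 ≤ Pf0 x) (hPf0_sum : ∑ x, Pf0 x = 1)
    (h_overlap_0 : ∀ x, Pf0 x = 0 → Pf x = 0)
    (PRhat : 𝒳 → ℝ) (hPRhat_pos : ∀ x, 0 < PRhat x)
    (g : 𝒳 → ℝ)
    {Ω : Type*} [MeasurableSpace Ω] (μ : Measure Ω) [IsProbabilityMeasure μ]
    (n m : ℕ) (hn : 0 < n) (hm : 0 < m)
    (X : Fin n → Ω → 𝒳) (hX : ∀ i, Measurable (X i))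
    (hlaw : ∀ i x, (μ {ω | X i ω = x}).toReal = PR x)
    (Y : Fin n → Ω → ℝ) (hY : ∀ i, Integrable (Y i) μ)
    (hcond : ∀ i x, ∫ ω in {ω | X i ω = x}, Y i ω ∂μ = g x * PR x)
    (Xt : Fin m → Ω → 𝒳) (hXt : ∀ j, Measurable (Xt j))
    (hlawt : ∀ j x, (μ {ω | Xt j ω = x}).toReal = Pf0 x) :
    ∫ ω, ((1 / (n : ℝ)) * ∑ i, (Pf (X i ω) / PRhat (X i ω)) * (Y i ω - g (X i ω))
        + (1 / (m : ℝ)) * ∑ j, (Pf (Xt j ω) / Pf0 (Xt j ω)) * g (Xt j ω)) ∂μ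
      = ∑ x, Pf x * g x := by
  classical
  set c : 𝒳 → ℝ := fun x => Pf x / PRhat x with hc
  -- integral of constant-1 on level sets
  have hone : ∀ {X' : Ω → 𝒳}, Measurable X' → ∀ x,
      ∫ _ω in {ω' | X' ω' = x}, (1:ℝ) ∂μ = (μ {ω' | X' ω' = x}).toReal := by
    intro X' hX' x
    simp [setIntegral_const, Measure.real]
  have hone_int : Integrable (fun _ : Ω => (1:ℝ)) μ := integrable_const 1
  -- the outcome-model terms from X samples
  have hgint : ∀ i, Integrable (fun ω => g (X i ω)) μ := fun i => by
    simpa using aux_integrable (hX i) g hone_int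
  have hAint : ∀ i, Integrable
      (fun ω => c (X i ω) * (Y i ω - g (X i ω))) μ := fun i =>
    aux_integrable (hX i) c ((hY i).sub (hgint i))
  have hA : ∀ i, ∫ ω, c (X i ω) * (Y i ω - g (X i ω)) ∂μ = 0 := by
    intro i
    have e1 : ∫ ω, c (X i ω) * Y i ω ∂μ = ∑ x, c x * (g x * PR x) := by
      rw [aux_integral (hX i) c (hY i)]
      exact Finset.sum_congr rfl fun x _ => by rw [hcond i x]
    have e2 : ∫ ω, (c (X i ω) * g (X i ω)) * 1 ∂μ = ∑ x, c x * (g x * PR x) := by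
      rw [aux_integral (hX i) (fun x => c x * g x) hone_int]
      refine Finset.sum_congr rfl fun x _ => ?_
      rw [hone (hX i) x, hlaw i x]
      ring
    have e2' : ∫ ω, c (X i ω) * g (X i ω) ∂μ = ∑ x, c x * (g x * PR x) := by
      simpa using e2
    have hsplit : (fun ω => c (X i ω) * (Y i ω - g (X i ω)))
        = fun ω => c (X i ω) * Y i ω - c (X i ω) * g (X i ω) := by
      funext ω; ring
    rw [hsplit, integral_sub (aux_integrable (hX i) c (hY i))
      (by simpa using aux_integrable (hX i) (fun x => c x * g x) hone_int), e1, e2']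
    ring
  -- the reference-model terms
  have hBint : ∀ j, Integrable
      (fun ω => (Pf (Xt j ω) / Pf0 (Xt j ω)) * g (Xt j ω)) μ := fun j => by
    simpa using aux_integrable (hXt j) (fun x => Pf x / Pf0 x * g x) hone_int
  have hB : ∀ j, ∫ ω, (Pf (Xt j ω) / Pf0 (Xt j ω)) * g (Xt j ω) ∂μ
      = ∑ x, Pf x * g x := by
    intro j
    have := aux_integral (hXt j) (fun x => Pf x / Pf0 x * g x) (Y := fun _ => (1:ℝ)) hone_int
    simp only [mul_one] at this
    rw [this]
    refine Finset.sum_congr rfl fun x _ => ?_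
    rw [hone (hXt j) x, hlawt j x]
    by_cases h0 : Pf0 x = 0
    · simp [h0, h_overlap_0 x h0]
    · field_simp
  -- assemble
  have hSumA : Integrable (fun ω => ∑ i, c (X i ω) * (Y i ω - g (X i ω))) μ :=
    integrable_finset_sum _ fun i _ => hAint i
  have hSumB : Integrable (fun ω => ∑ j, (Pf (Xt j ω) / Pf0 (Xt j ω)) * g (Xt j ω)) μ :=
    integrable_finset_sum _ fun j _ => hBint j
  rw [integral_add (hSumA.const_mul _) (hSumB.const_mul _),
    integral_const_mul, integral_const_mul,
    integral_finset_sum _ fun i _ => hAint i,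
    integral_finset_sum _ fun j _ => hBint j]
  simp only [hA, hB, Finset.sum_const_zero, mul_zero, zero_add,
    Finset.sum_const, Finset.card_univ, Fintype.card_fin, nsmul_eq_mul]
  rw [one_div, inv_mul_cancel_left₀ (by exact_mod_cast hm.ne')]
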